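/- Given a Schreier system (M, A, Θ, λ) with all λ_{a,b,c} = 1, the fiberwise group multiplication map ((f,a),(g,a)) ↦ (f∘g, a) is a monoid homomorphism from the fiber product ∪A_a ×_M ∪A_a to ∪A_a, where ∪A_a carries the multiplication (f,a)(g,b) = (a_*(f)∘b^*(g), ab). -/

import Mathlib

/-- Transport along an equality of indices of an indexed family. -/
def fcast {M : Type*} (A : M → Type*) {x y : M} (h : x = y) (v : A x) : A y := h ▸ v

/-- The Grothendieck-style multiplication on `⋃_{a ∈ M} A_a`:
`(f,a)·(g,b) = (a_*(g) ∘ b^*(f), ab)`. -/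
def sMul {M : Type*} [Monoid M] (A : M → Type*) [∀ a : M, Group (A a)]
    (push : ∀ a b : M, A b →* A (a * b)) (pull : ∀ a b : M, A a →* A (a * b))
    (x y : Σ a : M, A a) : Σ a : M, A a :=
  ⟨x.1 * y.1, push x.1 y.1 y.2 * pull x.1 y.1 x.2⟩

/-- The fiber product `⋃A_a ×_M ⋃A_a` of the projection to `M` with itself. -/
def FProd {M : Type*} (A : M → Type*) : Type _ :=
  { p : (Σ a : M, A a) × (Σ a : M, A a) // p.1.1 = p.2.1 }

/-- Componentwise multiplication on the fiber product. -/
def fMul {M : Type*} [Monoid M] (A : M → Type*) [∀ a : M, Group (A a)]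
    (push : ∀ a b : M, A b →* A (a * b)) (pull : ∀ a b : M, A a →* A (a * b))
    (x y : FProd A) : FProd A :=
  ⟨(sMul A push pull x.1.1 y.1.1, sMul A push pull x.1.2 y.1.2), by
    show x.1.1.1 * y.1.1.1 = x.1.2.1 * y.1.2.1
    rw [x.2, y.2]⟩

/-- The fiberwise group multiplication `((f,a),(g,a)) ↦ (f·g, a)`. -/
def fibMul {M : Type*} [Monoid M] (A : M → Type*) [∀ a : M, Group (A a)]
    (x : FProd A) : Σ a : M, A a :=
  ⟨x.1.1.1, x.1.1.2 * fcast A x.2.symm x.1.2.2⟩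

/-- For a Schreier system with trivial `λ`, the fiberwise group multiplication
is a monoid homomorphism from the fiber product `⋃A_a ×_M ⋃A_a` (with
componentwise multiplication) to `⋃A_a` with the multiplication
`(f,a)(g,b) = (a_*(g) ∘ b^*(f), ab)`. -/
theorem stmt3 {M : Type*} [Monoid M] (A : M → Type*) [∀ a : M, Group (A a)]
    (push : ∀ a b : M, A b →* A (a * b))   -- `a_* : A_b → A_{ab}`
    (pull : ∀ a b : M, A a →* A (a * b))   -- `b^* : A_a → A_{ab}`
    (h1 : ∀ (a b c : M) (f : A c),
      push (a * b) c f = fcast A (mul_assoc a b c).symm (push a (b * c) (push b c f)))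
    (h2 : ∀ (a b c : M) (g : A b),
      pull (a * b) c (push a b g) = fcast A (mul_assoc a b c).symm (push a (b * c) (pull b c g)))
    (h3 : ∀ (a b c : M) (h : A a),
      pull (a * b) c (pull a b h) = fcast A (mul_assoc a b c).symm (pull a (b * c) h))
    (hc : ∀ (a b : M) (f : A b) (g : A a),
      push a b f * pull a b g = pull a b g * push a b f)
    (hn1 : ∀ (a : M) (f : A a), push 1 a f = fcast A (one_mul a).symm f)
    (hn2 : ∀ (a : M) (f : A a), pull a 1 f = fcast A (mul_one a).symm f) :
    (∀ x y : FProd A,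
        fibMul A (fMul A push pull x y)
          = sMul A push pull (fibMul A x) (fibMul A y))
    ∧ fibMul A ⟨(⟨1, 1⟩, ⟨1, 1⟩), rfl⟩ = ⟨1, 1⟩ := by
  constructor
  · rintro ⟨⟨⟨a, f⟩, ⟨a', f'⟩⟩, hx⟩ ⟨⟨⟨b, g⟩, ⟨b', g'⟩⟩, hy⟩
    dsimp only at hx hy
    subst hx; subst hy
    simp only [fibMul, fMul, sMul, fcast, map_mul]
    congr 1
    change (push a b) g * (pull a b) f * ((push a b) g' * (pull a b) f') = (push a b) (g * g') * (pull a b) (f * f')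
    rw [map_mul, map_mul, mul_assoc (push a b g) (pull a b f), ← mul_assoc (pull a b f), ← hc]
    simp only [mul_assoc]
  · simp [fibMul, fcast]
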